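/- Suppose a_0,…,a_{n+1} are points in Q such that |⟨a_j,a_k⟩ − 1| < 1 for all j and k. Then Σ_{j=0}^{n+1} (−1)^j F(a_0,…,â_j,…,a_{n+1}) = 0, where the hat denotes omission of the j-th point. -/

import Mathlib

open MeasureTheory
open scoped BigOperators

noncomputable section

/-- The standard complex bilinear form `⟨z,w⟩ = z₀w₀ + ⋯ + zₙwₙ` on `ℂ^{n+1}`. -/
def cbil {n : ℕ} (z w : Fin (n + 1) → ℂ) : ℂ := ∑ i, z i * w i

/-- `F(A) = det A ⬝ ∫_{t₀,…,tₙ ≥ 0} exp(−Σ_{j,k} ⟨a_j,a_k⟩ t_j t_k) dt`, where `A` is the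
matrix with columns `a₀, …, aₙ`. -/
def Fdet {n : ℕ} (A : Fin (n + 1) → (Fin (n + 1) → ℂ)) : ℂ :=
  (Matrix.of fun i j => A j i).det *
    ∫ t in {t : Fin (n + 1) → ℝ | ∀ i, 0 ≤ t i},
      Complex.exp (-∑ j, ∑ k, cbil (A j) (A k) * (t j * t k))

namespace FA
variable {m : ℕ}
def orth (m : ℕ) : Set (Fin m → ℝ) := {t | ∀ i, 0 ≤ t i}

lemma measurableSet_orth (m : ℕ) : MeasurableSet (orth m) := by
  have : orth m = Set.pi Set.univ (fun _ : Fin m => Set.Ici (0:ℝ)) := by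
    ext t; simp only [orth, Set.mem_pi, Set.mem_setOf_eq, Set.mem_univ, forall_true_left, Set.mem_Ici, true_implies]
  rw [this]; exact MeasurableSet.univ_pi fun i => measurableSet_Ici

variable (c : Fin m → Fin m → ℂ)

def qf (t : Fin m → ℝ) : ℂ := ∑ j, ∑ k, c j k * (t j * t k)
def gf (t : Fin m → ℝ) : ℂ := Complex.exp (-qf c t)
def dgf (j : Fin m) (t : Fin m → ℝ) : ℂ := -(2 * ∑ k, c j k * (t k : ℂ)) * gf c t

lemma continuous_qf : Continuous (qf c) :=
  continuous_finset_sum _ fun j _ => continuous_finset_sum _ fun k _ =>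
    continuous_const.mul ((Complex.continuous_ofReal.comp (continuous_apply j)).mul
      (Complex.continuous_ofReal.comp (continuous_apply k)))

lemma continuous_gf : Continuous (gf c) := Complex.continuous_exp.comp (continuous_qf c).neg

lemma continuous_dgf (j : Fin m) : Continuous (dgf c j) := by
  refine Continuous.mul ?_ (continuous_gf c)
  exact (continuous_const.mul (continuous_finset_sum _ fun k _ =>
    continuous_const.mul (Complex.continuous_ofReal.comp (continuous_apply k)))).neg

lemma re_qf (t : Fin m → ℝ) : (qf c t).re = ∑ j, ∑ k, (c j k).re * (t j * t k) := by
  simp only [qf, Complex.re_sum, ← Complex.ofReal_mul, Complex.mul_re, Complex.ofReal_re,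
    Complex.ofReal_im, mul_zero, sub_zero]

lemma re_qf_ge (hdiag : ∀ j, (c j j).re = 1) (hpos : ∀ j k, 0 ≤ (c j k).re)
    {t : Fin m → ℝ} (ht : t ∈ orth m) : ∑ i, (t i)^2 ≤ (qf c t).re := by
  rw [re_qf]
  refine Finset.sum_le_sum fun j _ => ?_
  have h1 : (c j j).re * (t j * t j) ≤ ∑ k, (c j k).re * (t j * t k) :=
    Finset.single_le_sum (fun k _ => mul_nonneg (hpos j k) (mul_nonneg (ht j) (ht k)))
      (Finset.mem_univ j)
  calc (t j)^2 = (c j j).re * (t j * t j) := by rw [hdiag j]; ring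
  _ ≤ _ := h1

lemma norm_gf (t : Fin m → ℝ) : ‖gf c t‖ = Real.exp (-(qf c t).re) := by
  simp [gf, Complex.norm_exp]

lemma norm_gf_le (hdiag : ∀ j, (c j j).re = 1) (hpos : ∀ j k, 0 ≤ (c j k).re)
    {t : Fin m → ℝ} (ht : t ∈ orth m) : ‖gf c t‖ ≤ ∏ i, Real.exp (-(t i)^2) := by
  rw [norm_gf, ← Real.exp_sum]
  apply Real.exp_le_exp.2
  have := neg_le_neg (re_qf_ge c hdiag hpos ht)
  calc -(qf c t).re ≤ -∑ i, (t i)^2 := this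
  _ = ∑ i, -(t i)^2 := by rw [← Finset.sum_neg_distrib]

lemma int_gauss : Integrable (fun t : Fin m → ℝ => ∏ i, Real.exp (-(t i)^2)) :=
  Integrable.fintype_prod (f := fun _ x => Real.exp (-x^2)) fun _ => by
    simpa using integrable_exp_neg_mul_sq (b := 1) one_pos

lemma int_abs_gauss (k : Fin m) :
    Integrable (fun t : Fin m → ℝ => |t k| * ∏ i, Real.exp (-(t i)^2)) := by
  have h : Integrable (fun t : Fin m → ℝ =>
      ∏ i, ((if i = k then |t i| else 1) * Real.exp (-(t i)^2))) := by
    refine Integrable.fintype_prod (f := fun i x => (if i = k then |x| else 1) * Real.exp (-x^2))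
      fun i => ?_
    by_cases hik : i = k
    · simp only [hik, if_pos rfl]
      have := (integrable_mul_exp_neg_mul_sq (b := 1) one_pos).abs
      simpa [abs_mul, abs_of_pos (Real.exp_pos _)] using this
    · simp only [if_neg hik, one_mul]
      simpa using integrable_exp_neg_mul_sq (b := 1) one_pos
  refine h.congr (ae_of_all _ fun t => ?_)
  simp only [Finset.prod_mul_distrib]
  congr 1
  simp

end FA

namespace FA
variable {m : ℕ} (c : Fin m → Fin m → ℂ)

lemma intOn_gf (hdiag : ∀ j, (c j j).re = 1) (hpos : ∀ j k, 0 ≤ (c j k).re) :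
    IntegrableOn (gf c) (orth m) := by
  refine Integrable.mono' ((int_gauss (m := m)).restrict)
    ((continuous_gf c).aestronglyMeasurable.restrict) ?_
  rw [ae_restrict_iff' (measurableSet_orth m)]
  exact ae_of_all _ fun t ht => norm_gf_le c hdiag hpos ht

lemma intOn_dgf (hdiag : ∀ j, (c j j).re = 1) (hpos : ∀ j k, 0 ≤ (c j k).re)
    (habs : ∀ j k, ‖c j k‖ ≤ 2) (j : Fin m) :
    IntegrableOn (dgf c j) (orth m) := by
  have hint : Integrable (fun t : Fin m → ℝ => ∑ k, 4 * (|t k| * ∏ i, Real.exp (-(t i)^2))) :=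
    integrable_finset_sum _ fun k _ => (int_abs_gauss k).const_mul 4
  refine Integrable.mono' hint.restrict ((continuous_dgf c j).aestronglyMeasurable.restrict) ?_
  rw [ae_restrict_iff' (measurableSet_orth m)]
  refine ae_of_all _ fun t ht => ?_
  have h1 : ‖dgf c j t‖ = ‖(2 : ℂ) * ∑ k, c j k * (t k : ℂ)‖ * ‖gf c t‖ := by
    rw [dgf, norm_mul, norm_neg]
  have h2 : ‖(2 : ℂ) * ∑ k, c j k * (t k : ℂ)‖ ≤ ∑ k, 4 * |t k| := by
    rw [norm_mul]
    have : ‖∑ k, c j k * (t k : ℂ)‖ ≤ ∑ k, 2 * |t k| := by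
      refine (norm_sum_le _ _).trans (Finset.sum_le_sum fun k _ => ?_)
      rw [norm_mul, Complex.norm_real, Real.norm_eq_abs]
      exact mul_le_mul_of_nonneg_right (habs j k) (abs_nonneg _)
    calc ‖(2:ℂ)‖ * ‖∑ k, c j k * (t k : ℂ)‖ ≤ 2 * ∑ k, 2 * |t k| := by
          rw [show ‖(2:ℂ)‖ = 2 by norm_num]
          exact mul_le_mul_of_nonneg_left this (by norm_num)
    _ = ∑ k, 4 * |t k| := by rw [Finset.mul_sum]; exact Finset.sum_congr rfl fun k _ => by ring
  calc ‖dgf c j t‖ ≤ (∑ k, 4 * |t k|) * (∏ i, Real.exp (-(t i)^2)) := by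
        rw [h1]
        exact mul_le_mul h2 (norm_gf_le c hdiag hpos ht) (norm_nonneg _)
          (Finset.sum_nonneg fun k _ => by positivity)
  _ = ∑ k, 4 * (|t k| * ∏ i, Real.exp (-(t i)^2)) := by
        rw [Finset.sum_mul]; exact Finset.sum_congr rfl fun k _ => by ring

end FA

section Cramer

/-- Cramer-type identity: the alternating sum of minors times the omitted column vanishes. -/
lemma cramer_id {n : ℕ} (a : Fin (n + 2) → (Fin (n + 1) → ℂ)) (i : Fin (n + 1)) :
    ∑ j : Fin (n + 2), (-1 : ℂ) ^ (j : ℕ) *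
      (Matrix.of fun p q => a (j.succAbove q) p).det * a j i = 0 := by
  classical
  set M : Matrix (Fin (n + 2)) (Fin (n + 2)) ℂ :=
    Matrix.of (Fin.cons (fun k => a k i) (fun (r : Fin (n + 1)) k => a k r)) with hM
  have hdet0 : M.det = 0 := by
    refine Matrix.det_zero_of_row_eq (i := 0) (j := i.succ) (Fin.succ_ne_zero i).symm ?_
    funext k
    simp [hM, Matrix.of_apply]
  have hexp := Matrix.det_succ_row_zero M
  rw [hdet0] at hexp
  rw [hexp]
  refine Finset.sum_congr rfl fun j _ => ?_
  have h1 : M 0 j = a j i := by simp [hM]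
  have h2 : (M.submatrix Fin.succ j.succAbove) = Matrix.of fun p q => a (j.succAbove q) p := by
    ext p q
    simp [hM, Matrix.submatrix_apply]
  rw [h1, h2]
  ring

end Cramer

namespace FA
variable {ν : ℕ} (c : Fin (ν + 1) → Fin (ν + 1) → ℂ) (j : Fin (ν + 1))

/-- sub-coefficient matrix omitting index `j` -/
def csub (p q : Fin ν) : ℂ := c (j.succAbove p) (j.succAbove q)

/-- linear coefficient -/
def Bc (s : Fin ν → ℝ) : ℂ := ∑ p, c j (j.succAbove p) * (s p : ℂ)

lemma double_split (f : Fin (ν + 1) → Fin (ν + 1) → ℂ) :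
    ∑ p, ∑ k, f p k = f j j + (∑ q, f j (j.succAbove q)) + (∑ p, f (j.succAbove p) j)
      + ∑ p, ∑ q, f (j.succAbove p) (j.succAbove q) := by
  rw [Fin.sum_univ_succAbove (fun p => ∑ k, f p k) j,
    Fin.sum_univ_succAbove (fun k => f j k) j]
  have : ∀ p : Fin ν, ∑ k, f (j.succAbove p) k
      = f (j.succAbove p) j + ∑ q, f (j.succAbove p) (j.succAbove q) :=
    fun p => Fin.sum_univ_succAbove (fun k => f (j.succAbove p) k) j
  simp only [this, Finset.sum_add_distrib]
  ring

lemma qsplit (hsym : ∀ p q, c p q = c q p) (hdiag : ∀ p, c p p = 1)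
    (y : ℝ) (s : Fin ν → ℝ) :
    qf c (j.insertNth y s) = (y : ℂ)^2 + 2 * Bc c j s * (y : ℂ) + qf (csub c j) s := by
  set t : Fin (ν + 1) → ℝ := j.insertNth y s with ht
  have htj : t j = y := by rw [ht, Fin.insertNth_apply_same]
  have hts : ∀ p, t (j.succAbove p) = s p := fun p => by
    rw [ht, Fin.insertNth_apply_succAbove]
  rw [qf, double_split j (fun p k => c p k * ((t p : ℂ) * (t k : ℂ)))]
  simp only [htj, hts, hdiag j, one_mul]
  have hsw : ∀ p : Fin ν, c (j.succAbove p) j = c j (j.succAbove p) := fun p => hsym _ _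
  simp only [hsw]
  rw [show qf (csub c j) s = ∑ p, ∑ q, c (j.succAbove p) (j.succAbove q) * ((s p : ℂ) * (s q : ℂ))
    from rfl, Bc]
  rw [show (2 : ℂ) * (∑ p, c j (j.succAbove p) * (s p : ℂ)) * (y : ℂ)
      = (∑ q, c j (j.succAbove q) * ((y:ℂ) * (s q : ℂ)))
        + ∑ p, c j (j.succAbove p) * ((s p : ℂ) * (y:ℂ)) by
    rw [Finset.mul_sum, Finset.sum_mul, ← Finset.sum_add_distrib]
    exact Finset.sum_congr rfl fun p _ => by ring]
  push_cast
  ring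

lemma lin_split (hdiag : ∀ p, c p p = 1) (y : ℝ) (s : Fin ν → ℝ) :
    ∑ k, c j k * ((j.insertNth y s : Fin (ν+1) → ℝ) k : ℂ) = (y : ℂ) + Bc c j s := by
  rw [Fin.sum_univ_succAbove (fun k => c j k * ((j.insertNth y s : Fin (ν+1) → ℝ) k : ℂ)) j]
  simp [Fin.insertNth_apply_same, Fin.insertNth_apply_succAbove, hdiag j, Bc]

lemma hasDeriv_gf (hsym : ∀ p q, c p q = c q p) (hdiag : ∀ p, c p p = 1)
    (s : Fin ν → ℝ) (y : ℝ) :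
    HasDerivAt (fun y : ℝ => gf c (j.insertNth y s)) (dgf c j (j.insertNth y s)) y := by
  set P : ℝ → ℂ := fun y => (y : ℂ)^2 + 2 * Bc c j s * (y : ℂ) + qf (csub c j) s with hP
  have h0 : HasDerivAt (fun y : ℝ => (y : ℂ)) 1 y := by
    exact Complex.ofRealCLM.hasDerivAt
  have hPd : HasDerivAt P (2 * (y : ℂ) + 2 * Bc c j s) y := by
    have h1 : HasDerivAt (fun y : ℝ => ((y : ℂ))^2) (2 * (y : ℂ)) y := by
      have := h0.mul h0
      simp only [one_mul, mul_one] at this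
      have h2' : HasDerivAt (fun y : ℝ => (y:ℂ) * (y:ℂ)) ((y:ℂ) + (y:ℂ)) y := this
      simpa [pow_two, two_mul] using h2'
    have h2 : HasDerivAt (fun y : ℝ => 2 * Bc c j s * (y : ℂ)) (2 * Bc c j s) y := by
      simpa using (h0.const_mul (2 * Bc c j s))
    exact (h1.add h2).add_const (qf (csub c j) s)
  have hE := hPd.neg.cexp
  have hfun : (fun y : ℝ => gf c (j.insertNth y s)) = fun y : ℝ => Complex.exp (-(P y)) :=
    funext fun y => by rw [gf, qsplit c j hsym hdiag]
  rw [hfun, show dgf c j (j.insertNth y s)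
      = Complex.exp (-(P y)) * -(2 * (y : ℂ) + 2 * Bc c j s) by
    rw [dgf, lin_split c j hdiag, gf, qsplit c j hsym hdiag]
    ring]
  exact hE

lemma re_P (B C : ℂ) (y : ℝ) :
    ((y : ℂ)^2 + 2 * B * (y : ℂ) + C).re = y^2 + 2 * B.re * y + C.re := by
  simp [Complex.add_re, Complex.mul_re, Complex.mul_im, Complex.ofReal_re, Complex.ofReal_im,
    ← Complex.ofReal_pow]

lemma re_Bc_nonneg (hpos : ∀ p k, 0 ≤ (c p k).re) {s : Fin ν → ℝ} (hs : s ∈ orth ν) :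
    0 ≤ (Bc c j s).re := by
  rw [Bc, Complex.re_sum]
  refine Finset.sum_nonneg fun p _ => ?_
  have : (c j (j.succAbove p) * ((s p : ℝ) : ℂ)).re = (c j (j.succAbove p)).re * s p := by
    simp [Complex.mul_re]
  rw [this]
  exact mul_nonneg (hpos _ _) (hs p)

lemma norm_gf_insert (hsym : ∀ p q, c p q = c q p) (hdiag : ∀ p, c p p = 1)
    (hpos : ∀ p k, 0 ≤ (c p k).re) {s : Fin ν → ℝ} (hs : s ∈ orth ν) {y : ℝ} (hy : 0 ≤ y) :
    ‖gf c (j.insertNth y s)‖ ≤ Real.exp (-(qf (csub c j) s).re) * Real.exp (-y^2) := by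
  rw [norm_gf, qsplit c j hsym hdiag, re_P, ← Real.exp_add]
  apply Real.exp_le_exp.2
  nlinarith [mul_nonneg (re_Bc_nonneg c j hpos hs) hy]

lemma tendsto_gf (hsym : ∀ p q, c p q = c q p) (hdiag : ∀ p, c p p = 1)
    (hpos : ∀ p k, 0 ≤ (c p k).re) {s : Fin ν → ℝ} (hs : s ∈ orth ν) :
    Filter.Tendsto (fun y : ℝ => gf c (j.insertNth y s)) Filter.atTop (nhds 0) := by
  have hb : ∀ᶠ y : ℝ in Filter.atTop,
      ‖gf c (j.insertNth y s)‖ ≤ Real.exp (-(qf (csub c j) s).re) * Real.exp (-y^2) := by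
    filter_upwards [Filter.eventually_ge_atTop (0:ℝ)] with y hy
    exact norm_gf_insert c j hsym hdiag hpos hs hy
  have h2 : Filter.Tendsto (fun y : ℝ => Real.exp (-y^2)) Filter.atTop (nhds 0) :=
    Real.tendsto_exp_atBot.comp
      ((Filter.tendsto_neg_atTop_atBot).comp (Filter.tendsto_pow_atTop (two_ne_zero)))
  have h3 : Filter.Tendsto
      (fun y : ℝ => Real.exp (-(qf (csub c j) s).re) * Real.exp (-y^2)) Filter.atTop (nhds 0) := by
    simpa using h2.const_mul (Real.exp (-(qf (csub c j) s).re))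
  exact squeeze_zero_norm' hb h3

lemma intOn_deriv (hsym : ∀ p q, c p q = c q p) (hdiag : ∀ p, c p p = 1)
    (hpos : ∀ p k, 0 ≤ (c p k).re) {s : Fin ν → ℝ} (hs : s ∈ orth ν) :
    IntegrableOn (fun y : ℝ => dgf c j (j.insertNth y s)) (Set.Ioi 0) := by
  set K := Real.exp (-(qf (csub c j) s).re) with hK
  have i1 : IntegrableOn (fun y : ℝ => (2 * K) * (y * Real.exp (-y^2))) (Set.Ioi 0) := by
    refine Integrable.integrableOn ((Integrable.const_mul ?_ _))
    simpa using integrable_mul_exp_neg_mul_sq (b := 1) one_pos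
  have i2 : IntegrableOn
      (fun y : ℝ => (2 * ‖Bc c j s‖ * K) * Real.exp (-y^2)) (Set.Ioi 0) := by
    refine Integrable.integrableOn ((Integrable.const_mul ?_ _))
    simpa using integrable_exp_neg_mul_sq (b := 1) one_pos
  have hcont : Continuous (fun y : ℝ => dgf c j (j.insertNth y s)) :=
    (continuous_dgf c j).comp
      (Continuous.finInsertNth (A := fun _ : Fin (ν+1) => ℝ) j continuous_id continuous_const)
  refine Integrable.mono' (i1.add i2) (hcont.aestronglyMeasurable.restrict) ?_
  · rw [ae_restrict_iff' measurableSet_Ioi]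
    refine ae_of_all _ fun y hy => ?_
    have hy0 : (0:ℝ) ≤ y := le_of_lt hy
    have hnorm : ‖dgf c j (j.insertNth y s)‖
        ≤ (2 * y + 2 * ‖Bc c j s‖) * (K * Real.exp (-y^2)) := by
      rw [dgf, norm_mul, norm_neg, lin_split c j hdiag]
      have hb1 : ‖(2:ℂ) * ((y:ℂ) + Bc c j s)‖ ≤ 2 * y + 2 * ‖Bc c j s‖ := by
        rw [norm_mul, show ‖(2:ℂ)‖ = 2 by norm_num]
        calc 2 * ‖(y:ℂ) + Bc c j s‖ ≤ 2 * (‖(y:ℂ)‖ + ‖Bc c j s‖) := by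
              have := norm_add_le ((y:ℂ)) (Bc c j s)
              nlinarith
        _ = 2 * y + 2 * ‖Bc c j s‖ := by
              rw [Complex.norm_real, Real.norm_eq_abs, abs_of_nonneg hy0]; ring
      have hb2 := norm_gf_insert c j hsym hdiag hpos hs hy0
      exact mul_le_mul hb1 hb2 (norm_nonneg _) (by positivity)
    simp only [Pi.add_apply]
    refine hnorm.trans (le_of_eq ?_)
    ring

lemma inner_integral (hsym : ∀ p q, c p q = c q p) (hdiag : ∀ p, c p p = 1)
    (hpos : ∀ p k, 0 ≤ (c p k).re) {s : Fin ν → ℝ} (hs : s ∈ orth ν) :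
    ∫ y in Set.Ioi (0:ℝ), dgf c j (j.insertNth y s) = - gf (csub c j) s := by
  have h := integral_Ioi_of_hasDerivAt_of_tendsto' (a := (0:ℝ)) (m := (0:ℂ))
    (fun y _ => hasDeriv_gf c j hsym hdiag s y)
    (intOn_deriv c j hsym hdiag hpos hs)
    (tendsto_gf c j hsym hdiag hpos hs)
  rw [h, zero_sub]
  congr 1
  rw [gf, gf, qsplit c j hsym hdiag]
  norm_num

lemma key_step (hsym : ∀ p q, c p q = c q p) (hdiag : ∀ p, c p p = 1)
    (hpos : ∀ p k, 0 ≤ (c p k).re) (habs : ∀ p k, ‖c p k‖ ≤ 2) :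
    ∫ t in orth (ν + 1), dgf c j t = - ∫ s in orth ν, gf (csub c j) s := by
  have hdiag' : ∀ p, (c p p).re = 1 := fun p => by rw [hdiag p]; rfl
  set e := MeasurableEquiv.piFinSuccAbove (fun _ : Fin (ν + 1) => ℝ) j with he
  have hMP : MeasurePreserving e volume volume :=
    volume_preserving_piFinSuccAbove (fun _ : Fin (ν + 1) => ℝ) j
  have hset : MeasurableSet (Set.Ici (0:ℝ) ×ˢ orth ν) :=
    measurableSet_Ici.prod (measurableSet_orth ν)
  have hpre : e ⁻¹' (Set.Ici (0:ℝ) ×ˢ orth ν) = orth (ν + 1) := by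
    ext x
    simp only [Set.mem_preimage, Set.mem_prod, Set.mem_Ici, he,
      MeasurableEquiv.piFinSuccAbove_apply, orth, Set.mem_setOf_eq]
    rw [Fin.forall_iff_succAbove j]
    rfl
  have hMPr : MeasurePreserving e (volume.restrict (orth (ν + 1)))
      (volume.restrict (Set.Ici (0:ℝ) ×ˢ orth ν)) := by
    have := hMP.restrict_preimage hset
    rwa [hpre] at this
  have hgeq : ∀ x : Fin (ν + 1) → ℝ,
      dgf c j ((j.insertNth ((e x).1) ((e x).2) : Fin (ν + 1) → ℝ)) = dgf c j x := by
    intro x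
    congr 1
    simp only [he, MeasurableEquiv.piFinSuccAbove_apply]
    exact Fin.insertNth_self_removeNth j x
  have hInt2 : Integrable (fun p : ℝ × (Fin ν → ℝ) =>
      dgf c j ((j.insertNth p.1 p.2 : Fin (ν + 1) → ℝ)))
      (volume.restrict (Set.Ici (0:ℝ) ×ˢ orth ν)) := by
    rw [← hMPr.integrable_comp_emb e.measurableEmbedding]
    have : (fun p : ℝ × (Fin ν → ℝ) =>
        dgf c j ((j.insertNth p.1 p.2 : Fin (ν + 1) → ℝ))) ∘ e = dgf c j := funext hgeq
    rw [this]
    exact intOn_dgf c hdiag' hpos habs j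
  calc ∫ t in orth (ν + 1), dgf c j t
      = ∫ p in Set.Ici (0:ℝ) ×ˢ orth ν,
          dgf c j ((j.insertNth p.1 p.2 : Fin (ν + 1) → ℝ)) := by
        rw [← hMPr.integral_comp e.measurableEmbedding]
        exact integral_congr_ae (ae_of_all _ hgeq) |>.symm
  _ = ∫ s in orth ν, ∫ y in Set.Ici (0:ℝ),
        dgf c j ((j.insertNth y s : Fin (ν + 1) → ℝ)) := by
      rw [show (volume : Measure (ℝ × (Fin ν → ℝ))).restrict (Set.Ici (0:ℝ) ×ˢ orth ν)
          = ((volume : Measure ℝ).restrict (Set.Ici (0:ℝ))).prod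
            ((volume : Measure (Fin ν → ℝ)).restrict (orth ν)) by
        rw [Measure.prod_restrict, ← Measure.volume_eq_prod]]
      rw [show (volume : Measure (ℝ × (Fin ν → ℝ))).restrict (Set.Ici (0:ℝ) ×ˢ orth ν)
          = ((volume : Measure ℝ).restrict (Set.Ici (0:ℝ))).prod
            ((volume : Measure (Fin ν → ℝ)).restrict (orth ν)) by
        rw [Measure.prod_restrict, ← Measure.volume_eq_prod]] at hInt2
      exact MeasureTheory.integral_prod_symm _ hInt2
  _ = ∫ s in orth ν, -gf (csub c j) s := by
      refine setIntegral_congr_fun (measurableSet_orth ν) fun s hs => ?_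
      rw [integral_Ici_eq_integral_Ioi]
      exact inner_integral c j hsym hdiag hpos hs
  _ = - ∫ s in orth ν, gf (csub c j) s := integral_neg _

end FA

/-- Suppose `a₀, …, a_{n+1}` are points of the quadric `Q = {z | ⟨z,z⟩ = 1}` such that
`|⟨a_j,a_k⟩ − 1| < 1` for all `j, k`.  Then
`Σ_{j=0}^{n+1} (−1)^j F(a₀, …, â_j, …, a_{n+1}) = 0`. -/
theorem Fdet_alternating_sum_zero
    (n : ℕ) (a : Fin (n + 2) → (Fin (n + 1) → ℂ))
    (hQ : ∀ j, cbil (a j) (a j) = 1)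
    (hclose : ∀ j k, ‖cbil (a j) (a k) - 1‖ < 1) :
    ∑ j : Fin (n + 2), (-1 : ℂ) ^ (j : ℕ) * Fdet (fun i => a (j.succAbove i)) = 0 := by
  classical
  set c : Fin (n + 2) → Fin (n + 2) → ℂ := fun j k => cbil (a j) (a k) with hc
  have hsym : ∀ p q, c p q = c q p := fun p q => by
    simp only [hc, cbil]
    exact Finset.sum_congr rfl fun i _ => mul_comm _ _
  have hdiag : ∀ p, c p p = 1 := fun p => hQ p
  have hpos : ∀ p q, 0 ≤ (c p q).re := by
    intro p q
    have h1 := hclose p q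
    have h2 : |(c p q - 1).re| ≤ ‖c p q - 1‖ := Complex.abs_re_le_norm _
    have h3 : (c p q).re = (c p q - 1).re + 1 := by simp [Complex.sub_re]
    have h4 := neg_abs_le ((c p q - 1).re)
    linarith
  have habs : ∀ p q, ‖c p q‖ ≤ 2 := by
    intro p q
    have h1 := hclose p q
    calc ‖c p q‖ = ‖c p q - 1 + 1‖ := by rw [sub_add_cancel]
    _ ≤ ‖c p q - 1‖ + ‖(1:ℂ)‖ := norm_add_le _ _
    _ ≤ 2 := by simp; linarith
  set D : Fin (n + 2) → ℂ := fun j => (Matrix.of fun p q => a (j.succAbove q) p).det with hD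
  -- rewrite each `Fdet` term
  have hFdet : ∀ j : Fin (n + 2), Fdet (fun i => a (j.succAbove i))
      = D j * ∫ t in FA.orth (n + 1), FA.gf (FA.csub c j) t := by
    intro j
    rfl
  simp only [hFdet]
  -- apply the key integral identity
  have hkey : ∀ j : Fin (n + 2), (∫ t in FA.orth (n + 1), FA.gf (FA.csub c j) t)
      = - ∫ t in FA.orth (n + 2), FA.dgf c j t := by
    intro j
    have := FA.key_step c j hsym hdiag hpos habs
    rw [this]
    ring
  simp only [hkey]
  have hdiag' : ∀ p, (c p p).re = 1 := fun p => by rw [hdiag p]; rfl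
  -- turn products into integrals
  have hmul : ∀ j : Fin (n + 2), (-1 : ℂ) ^ (j : ℕ) * (D j * - ∫ t in FA.orth (n + 2), FA.dgf c j t)
      = - ∫ t in FA.orth (n + 2), ((-1 : ℂ) ^ (j : ℕ) * D j) * FA.dgf c j t := by
    intro j
    rw [MeasureTheory.integral_const_mul]
    ring
  simp only [hmul]
  have hz0 : ∀ t : Fin (n + 2) → ℝ,
      ∑ j : Fin (n + 2), ((-1:ℂ)^(j:ℕ) * D j) * (∑ k, c j k * ((t k : ℝ) : ℂ)) = 0 := by
    intro t
    have step1 : ∀ j : Fin (n + 2), ((-1:ℂ)^(j:ℕ) * D j) * (∑ k, c j k * ((t k : ℝ) : ℂ))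
        = ∑ k, ∑ i, ((-1:ℂ)^(j:ℕ) * D j * a j i) * (a k i * ((t k : ℝ) : ℂ)) := by
      intro j
      rw [Finset.mul_sum]
      refine Finset.sum_congr rfl fun k _ => ?_
      rw [show c j k = ∑ i, a j i * a k i from rfl, Finset.sum_mul, Finset.mul_sum]
      exact Finset.sum_congr rfl fun i _ => by ring
    simp only [step1]
    rw [Finset.sum_comm]
    refine Finset.sum_eq_zero fun k _ => ?_
    rw [Finset.sum_comm]
    refine Finset.sum_eq_zero fun i _ => ?_
    rw [← Finset.sum_mul, cramer_id a i, zero_mul]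
  have hz : ∀ t : Fin (n + 2) → ℝ, ∑ j : Fin (n + 2), ((-1:ℂ)^(j:ℕ) * D j) * FA.dgf c j t = 0 := by
    intro t
    have hterm : ∀ j : Fin (n + 2), ((-1:ℂ)^(j:ℕ) * D j) * FA.dgf c j t
        = (-2 * FA.gf c t) * (((-1:ℂ)^(j:ℕ) * D j) * (∑ k, c j k * ((t k : ℝ) : ℂ))) := by
      intro j
      rw [FA.dgf]
      ring
    simp only [hterm]
    rw [← Finset.mul_sum, hz0, mul_zero]
  rw [Finset.sum_neg_distrib, ← MeasureTheory.integral_finset_sum]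
  · rw [show (fun t : Fin (n + 2) → ℝ => ∑ j : Fin (n + 2), ((-1:ℂ)^(j:ℕ) * D j) * FA.dgf c j t)
        = fun _ => (0:ℂ) from funext hz, integral_zero, neg_zero]
  · exact fun j _ => (FA.intOn_dgf c hdiag' hpos habs j).const_mul _

end
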